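/- Let T be a bounded linear operator on a complex Hilbert space H. Then w(T)² ≤ (1/2)‖T*T + TT*‖, where w denotes the numerical radius. -/

import Mathlib

/-- The numerical radius of a bounded linear operator. -/
noncomputable def numRadius {E : Type*} [NormedAddCommGroup E] [InnerProductSpace ℂ E]
    (T : E →L[ℂ] E) : ℝ :=
  ⨆ x : {x : E // ‖x‖ = 1}, ‖(inner ℂ (T x.val) x.val : ℂ)‖

theorem stmt_5 {H : Type*} [NormedAddCommGroup H] [InnerProductSpace ℂ H] [CompleteSpace H]
    (T : H →L[ℂ] H) :
    numRadius T ^ 2 ≤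
      (1 / 2 : ℝ) * ‖ContinuousLinearMap.adjoint T * T + T * ContinuousLinearMap.adjoint T‖ := by
  set S := ContinuousLinearMap.adjoint T * T + T * ContinuousLinearMap.adjoint T with hS
  set c : ℝ := (1 / 2 : ℝ) * ‖S‖ with hc
  have hc0 : 0 ≤ c := by positivity
  have hrad0 : 0 ≤ numRadius T := Real.iSup_nonneg fun x => norm_nonneg _
  have key : numRadius T ≤ Real.sqrt c := by
    unfold numRadius
    rcases isEmpty_or_nonempty {x : H // ‖x‖ = 1} with hE | hE
    · rw [iSup_of_empty', Real.sSup_empty]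
      exact Real.sqrt_nonneg _
    · refine ciSup_le fun x => ?_
      obtain ⟨x, hx⟩ := x
      simp only
      rw [Real.le_sqrt (norm_nonneg _)]
      set a : ℝ := ‖(inner ℂ (T x) x : ℂ)‖
      have h1 : a ≤ ‖T x‖ := by
        calc a ≤ ‖T x‖ * ‖x‖ := norm_inner_le_norm _ _
        _ = ‖T x‖ := by rw [hx, mul_one]
      have h2 : a ≤ ‖ContinuousLinearMap.adjoint T x‖ := by
        have : (inner ℂ (T x) x : ℂ) = inner ℂ x (ContinuousLinearMap.adjoint T x) := by
          rw [ContinuousLinearMap.adjoint_inner_right]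
        calc a = ‖(inner ℂ x (ContinuousLinearMap.adjoint T x) : ℂ)‖ := congrArg norm this
          _ ≤ ‖x‖ * ‖ContinuousLinearMap.adjoint T x‖ := norm_inner_le_norm _ _
          _ = ‖ContinuousLinearMap.adjoint T x‖ := by rw [hx, one_mul]
      have ha0 : 0 ≤ a := norm_nonneg _
      have hsq : a ^ 2 ≤ (1 / 2 : ℝ) * (‖T x‖ ^ 2 + ‖ContinuousLinearMap.adjoint T x‖ ^ 2) := by
        nlinarith [mul_le_mul h1 h2 ha0 (norm_nonneg (T x)),
          sq_nonneg (‖T x‖ - ‖ContinuousLinearMap.adjoint T x‖)]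
      have hre : ‖T x‖ ^ 2 + ‖ContinuousLinearMap.adjoint T x‖ ^ 2
          = Complex.re (inner ℂ (S x) x : ℂ) := by
        have e1 : (inner ℂ ((ContinuousLinearMap.adjoint T * T) x) x : ℂ) = inner ℂ (T x) (T x) := by
          simp [ContinuousLinearMap.mul_apply, ContinuousLinearMap.adjoint_inner_left]
        have e2 : (inner ℂ ((T * ContinuousLinearMap.adjoint T) x) x : ℂ)
            = inner ℂ (ContinuousLinearMap.adjoint T x) (ContinuousLinearMap.adjoint T x) := by
          rw [ContinuousLinearMap.mul_apply, ContinuousLinearMap.adjoint_inner_right]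
        rw [hS]
        simp only [ContinuousLinearMap.add_apply, inner_add_left, Complex.add_re]
        rw [e1, e2]
        rw [← inner_self_eq_norm_sq (𝕜 := ℂ) (T x),
          ← inner_self_eq_norm_sq (𝕜 := ℂ) (ContinuousLinearMap.adjoint T x)]
        simp [RCLike.re_to_complex]
      have hbound : Complex.re (inner ℂ (S x) x : ℂ) ≤ ‖S‖ := by
        calc Complex.re (inner ℂ (S x) x : ℂ) ≤ ‖(inner ℂ (S x) x : ℂ)‖ := Complex.re_le_norm _
          _ ≤ ‖S x‖ * ‖x‖ := norm_inner_le_norm _ _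
          _ = ‖S x‖ := by rw [hx, mul_one]
          _ ≤ ‖S‖ * ‖x‖ := S.le_opNorm x
          _ = ‖S‖ := by rw [hx, mul_one]
      calc a ^ 2 ≤ (1 / 2 : ℝ) * (‖T x‖ ^ 2 + ‖ContinuousLinearMap.adjoint T x‖ ^ 2) := hsq
        _ = (1 / 2 : ℝ) * Complex.re (inner ℂ (S x) x : ℂ) := by rw [hre]
        _ ≤ c := by rw [hc]; nlinarith
      exact hc0
  calc numRadius T ^ 2 ≤ Real.sqrt c ^ 2 := pow_le_pow_left₀ hrad0 key 2
    _ = c := Real.sq_sqrt hc0
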